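/- Let f : ℂ → ℂ be meromorphic on all of ℂ and not constant (there exist points x, y at which f is analytic with f(x) ≠ f(y)). Suppose that f(x)·f(y) = f(x+y)·(f(x) + f(y)) for all x, y ∈ ℂ such that f is analytic at x, at y, and at x+y. Then there exists a nonzero a ∈ ℂ such that f(z) = a/z for every nonzero z at which f is analytic. (This is the functional equation determining the rational solutions g(u,v) = a/(u−v) of the Yang-Baxterization of an involutive symmetry.) -/

import Mathlib

open Filter Topology Set

private lemma my_uncountable_C : Uncountable ℂ :=
  Complex.ofReal_injective.uncountable

private lemma my_countable_of_punctured {S : Set ℂ}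
    (h : ∀ x : ℂ, ∀ᶠ w in 𝓝[≠] x, w ∉ S) : S.Countable := by
  have h' : ∀ x : ℂ, Disjoint (𝓝[≠] x) (𝓟 S) := fun x => disjoint_principal_right.mpr (h x)
  obtain ⟨-, hd⟩ := isClosed_and_discrete_iff.mpr h'
  exact (HereditarilyLindelof_LindelofSets S).countable (isDiscrete_iff_discreteTopology.mp hd)

private lemma my_preconnected_compl {S : Set ℂ} (h : S.Countable) : IsPreconnected Sᶜ :=
  (h.isConnected_compl_of_one_lt_rank
    (by rw [Complex.rank_real_complex]; exact Cardinal.one_lt_two)).isPreconnected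

private lemma my_exists_notMem {S : Set ℂ} (h : S.Countable) : ∃ z, z ∉ S := by
  by_contra hc
  push_neg at hc
  have : (univ : Set ℂ).Countable := by
    have : S = univ := eq_univ_of_forall hc
    rwa [this] at h
  exact (@not_countable_univ ℂ my_uncountable_C) this

/-- If `f` is meromorphic on ℂ, non-constant, and satisfies the functional equation
`f(x)·f(y) = f(x+y)·(f(x) + f(y))` (at points of analyticity), then `f(z) = a/z`
for some nonzero constant `a`. -/
theorem rational_solution_of_functional_equation
    (f : ℂ → ℂ) (hf : MeromorphicOn f Set.univ)
    (hnc : ∃ x y : ℂ, AnalyticAt ℂ f x ∧ AnalyticAt ℂ f y ∧ f x ≠ f y)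
    (heq : ∀ x y : ℂ, AnalyticAt ℂ f x → AnalyticAt ℂ f y → AnalyticAt ℂ f (x + y) →
      f x * f y = f (x + y) * (f x + f y)) :
    ∃ a : ℂ, a ≠ 0 ∧ ∀ z : ℂ, z ≠ 0 → AnalyticAt ℂ f z → f z = a / z := by
  obtain ⟨x₀, y₀, hx₀, hy₀, hxy₀⟩ := hnc
  set U : Set ℂ := {z | AnalyticAt ℂ f z} with hUdef
  have hUopen : IsOpen U := isOpen_iff_mem_nhds.mpr fun z hz => hz.eventually_analyticAt
  have hUmem : ∀ z : ℂ, ∀ᶠ w in 𝓝[≠] z, w ∈ U := fun z => (hf z trivial).eventually_analyticAt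
  have hUcount : Uᶜ.Countable :=
    my_countable_of_punctured fun z => (hUmem z).mono fun w hw => by simpa using hw
  have hUpre : IsPreconnected U := by
    have := my_preconnected_compl hUcount
    rwa [compl_compl] at this
  have hfU : AnalyticOnNhd ℂ f U := fun z hz => hz
  -- key: values of `f` off any non-omitted constant are attained only on a discrete set
  have key : ∀ c : ℂ, (f x₀ ≠ c ∨ f y₀ ≠ c) → ∀ z : ℂ, ∀ᶠ w in 𝓝[≠] z, f w ≠ c := by
    intro c hc z
    have hm : MeromorphicAt (fun u => f u - c) z :=
      (hf z trivial).sub (MeromorphicAt.const c z)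
    rcases eq_or_ne (meromorphicOrderAt (fun u => f u - c) z) ⊤ with h | h
    · exfalso
      have hev : ∀ᶠ w in 𝓝[≠] z, f w - c = 0 := meromorphicOrderAt_eq_top_iff.mp h
      have hcomb := hev.and (hUmem z)
      rw [eventually_nhdsWithin_iff] at hcomb
      obtain ⟨t, ht, hto, htz⟩ := eventually_nhds_iff.mp hcomb
      obtain ⟨p, hpt, hpz⟩ : ∃ p, p ∈ t ∧ p ≠ z := by
        have : t ∩ {z}ᶜ ∈ 𝓝[≠] z :=
          inter_mem (mem_nhdsWithin_of_mem_nhds (hto.mem_nhds htz)) self_mem_nhdsWithin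
        obtain ⟨p, hp⟩ := Filter.nonempty_of_mem this
        exact ⟨p, hp.1, hp.2⟩
      have hpU : p ∈ U := (ht p hpt hpz).2
      have hψloc : f =ᶠ[𝓝 p] fun _ => c := by
        have htmem : t ∩ {z}ᶜ ∈ 𝓝 p :=
          (hto.inter isOpen_compl_singleton).mem_nhds ⟨hpt, hpz⟩
        filter_upwards [htmem] with w hw
        exact sub_eq_zero.mp (ht w hw.1 hw.2).1
      have hEq : EqOn f (fun _ => c) U :=
        hfU.eqOn_of_preconnected_of_eventuallyEq (fun z _ => analyticAt_const) hUpre hpU hψloc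
      rcases hc with hc | hc
      · exact hc (hEq hx₀)
      · exact hc (hEq hy₀)
    · obtain ⟨n, hn⟩ := WithTop.ne_top_iff_exists.mp h
      obtain ⟨g, hg, hgz, hgeq⟩ := (meromorphicOrderAt_eq_int_iff hm).mp hn.symm
      have hgne : ∀ᶠ w in 𝓝[≠] z, g w ≠ 0 :=
        (hg.continuousAt.eventually_ne hgz).filter_mono nhdsWithin_le_nhds
      filter_upwards [hgeq, hgne, self_mem_nhdsWithin] with w hw hgw hwz
      intro hfc
      rw [Set.mem_compl_iff, Set.mem_singleton_iff] at hwz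
      rw [hfc, sub_self] at hw
      exact (smul_ne_zero (zpow_ne_zero n (sub_ne_zero.mpr hwz)) hgw) hw.symm
  -- the good set V : analytic and nonzero
  have hne0 : f x₀ ≠ 0 ∨ f y₀ ≠ 0 := by
    rcases eq_or_ne (f x₀) 0 with h | h
    · right; rw [h] at hxy₀; exact fun h' => hxy₀ h'.symm
    · left; exact h
  set V : Set ℂ := {z | AnalyticAt ℂ f z ∧ f z ≠ 0} with hVdef
  have hVmem : ∀ z : ℂ, ∀ᶠ w in 𝓝[≠] z, w ∈ V := by
    intro z
    filter_upwards [hUmem z, key 0 hne0 z] with w h1 h2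
    exact ⟨h1, h2⟩
  have hVcount : Vᶜ.Countable :=
    my_countable_of_punctured fun z => (hVmem z).mono fun w hw => by simpa using hw
  have hVopen : IsOpen V := by
    rw [isOpen_iff_mem_nhds]
    intro z hz
    filter_upwards [hz.1.eventually_analyticAt, hz.1.continuousAt.eventually_ne hz.2] with w h1 h2
    exact ⟨h1, h2⟩
  have hVpre : IsPreconnected V := by
    have := my_preconnected_compl hVcount
    rwa [compl_compl] at this
  set g : ℂ → ℂ := fun z => (f z)⁻¹ with hgdef
  have hgV : ∀ z ∈ V, AnalyticAt ℂ g z := fun z hz => hz.1.inv hz.2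
  -- translated bad sets are countable
  have htrans : ∀ t : ℂ, ((fun z : ℂ => z + t) ⁻¹' Vᶜ).Countable := by
    intro t
    have : (fun z : ℂ => z + t) ⁻¹' Vᶜ = (fun w : ℂ => w - t) '' Vᶜ := by
      ext z
      constructor
      · intro h; exact ⟨z + t, h, by ring⟩
      · rintro ⟨w, hw, rfl⟩; simpa [sub_add_cancel] using hw
    rw [this]
    exact hVcount.image _
  -- additivity of g on V via the identity principle
  have haddset : ∀ t ∈ V, Set.EqOn (fun z => g (z + t)) (fun z => g z + g t)
      (V ∩ (fun z : ℂ => z + t) ⁻¹' V) := by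
    intro t ht
    set A : Set ℂ := V ∩ (fun z : ℂ => z + t) ⁻¹' V with hAdef
    have hAopen : IsOpen A := hVopen.inter (hVopen.preimage (by continuity))
    have hAcount : Aᶜ.Countable := by
      rw [hAdef, Set.compl_inter]
      exact hVcount.union (by simpa [Set.preimage_compl] using htrans t)
    have hApre : IsPreconnected A := by
      have := my_preconnected_compl hAcount
      rwa [compl_compl] at this
    have hA1 : AnalyticOnNhd ℂ (fun z => g (z + t)) A := by
      intro z hz
      have h1 : AnalyticAt ℂ (fun w : ℂ => w + t) z := by
        exact analyticAt_id.add analyticAt_const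
      exact AnalyticAt.comp (f := fun w : ℂ => w + t) (x := z) (hgV (z + t) hz.2) h1
    have hA2 : AnalyticOnNhd ℂ (fun z => g z + g t) A := fun z hz =>
      (hgV z hz.1).add analyticAt_const
    have heqpt : ∀ z, z ∈ V → z + t ∈ V → f z + f t ≠ 0 → g (z + t) = g z + g t := by
      intro z hz hzt hsum
      have h1 := heq z t hz.1 ht.1 hzt.1
      have hfz := hz.2; have hft := ht.2; have hfzt := hzt.2
      have h2 : (g z + g t) * f (z + t) = 1 := by
        rw [hgdef]
        field_simp
        linear_combination -h1
      exact (eq_inv_of_mul_eq_one_left h2).symm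
    obtain ⟨z₁, hz₁⟩ : A.Nonempty := by
      obtain ⟨z, hz⟩ := my_exists_notMem hAcount
      exact ⟨z, not_not.mp hz⟩
    have hcne : f x₀ ≠ -f t ∨ f y₀ ≠ -f t := by
      by_contra h'
      push_neg at h'
      exact hxy₀ (h'.1.trans h'.2.symm)
    have hfreq : ∃ᶠ w in 𝓝[≠] z₁, (fun z => g (z + t)) w = (fun z => g z + g t) w := by
      apply Eventually.frequently
      have hAev : ∀ᶠ w in 𝓝[≠] z₁, w ∈ A :=
        mem_nhdsWithin_of_mem_nhds (hAopen.mem_nhds hz₁)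
      filter_upwards [hAev, key (-f t) hcne z₁] with w hwA hwne
      exact heqpt w hwA.1 hwA.2 fun h => hwne (eq_neg_of_add_eq_zero_left h)
    exact hA1.eqOn_of_preconnected_of_frequently_eq hA2 hApre hz₁ hfreq
  have hadd : ∀ t ∈ V, ∀ z ∈ V, z + t ∈ V → g (z + t) = g z + g t := by
    intro t ht z hz hzt
    exact haddset t ht ⟨hz, hzt⟩
  -- derivative of g is translation invariant
  have hderiv : ∀ t ∈ V, ∀ z ∈ V, z + t ∈ V → deriv g (z + t) = deriv g z := by
    intro t ht z hz hzt
    have hAopen : IsOpen (V ∩ (fun z : ℂ => z + t) ⁻¹' V) :=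
      hVopen.inter (hVopen.preimage (by continuity))
    have hev : (fun w => g (w + t)) =ᶠ[𝓝 z] (fun w => g w + g t) :=
      eventually_of_mem (hAopen.mem_nhds ⟨hz, hzt⟩) (haddset t ht)
    have h2 := hev.deriv_eq
    rwa [deriv_comp_add_const, deriv_add_const] at h2
  -- hence deriv g is constant on V
  have hVne : V.Nonempty := by
    obtain ⟨z, hz⟩ := my_exists_notMem hVcount
    exact ⟨z, not_not.mp hz⟩
  obtain ⟨w₀, hw₀⟩ := hVne
  set c : ℂ := deriv g w₀ with hcdef
  have hc : ∀ z ∈ V, deriv g z = c := by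
    intro z hz
    obtain ⟨w, hw⟩ := my_exists_notMem
      ((hVcount.union (htrans z)).union (htrans w₀) :
        ((Vᶜ ∪ (fun u : ℂ => u + z) ⁻¹' Vᶜ) ∪ (fun u : ℂ => u + w₀) ⁻¹' Vᶜ).Countable)
    simp only [Set.mem_union, Set.mem_preimage, Set.mem_compl_iff, not_or, not_not] at hw
    obtain ⟨⟨hwV, hwz⟩, hww⟩ := hw
    have h1 : deriv g (w + z) = deriv g w := hderiv z hz w hwV hwz
    have h2 : deriv g (w + z) = deriv g z := by
      rw [add_comm]; exact hderiv w hwV z hz (by rwa [add_comm] at hwz)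
    have h3 : deriv g (w + w₀) = deriv g w := hderiv w₀ hw₀ w hwV hww
    have h4 : deriv g (w + w₀) = deriv g w₀ := by
      rw [add_comm]; exact hderiv w hwV w₀ hw₀ (by rwa [add_comm] at hww)
    rw [← h2, h1, ← h3, h4]
  -- integrate: g z = c z + d on V
  set ψ : ℂ → ℂ := fun z => g z - c * z with hψdef
  have hψA : AnalyticOnNhd ℂ ψ V := fun z hz =>
    (hgV z hz).sub (analyticAt_const.mul analyticAt_id)
  have hψloc : ψ =ᶠ[𝓝 w₀] fun _ => ψ w₀ := by
    obtain ⟨r, hr, hball⟩ := Metric.isOpen_iff.mp hVopen w₀ hw₀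
    have hdiff : DifferentiableOn ℂ ψ (Metric.ball w₀ r) := fun x hx =>
      ((hψA x (hball hx)).differentiableAt).differentiableWithinAt
    have hfd : ∀ x ∈ Metric.ball w₀ r, fderivWithin ℂ ψ (Metric.ball w₀ r) x = 0 := by
      intro x hx
      have hdz : HasDerivAt ψ 0 x := by
        have h1 : HasDerivAt g c x := by
          have := ((hgV x (hball hx)).differentiableAt).hasDerivAt
          rwa [hc x (hball hx)] at this
        have h2 : HasDerivAt (fun z : ℂ => c * z) c x := by
          simpa using (hasDerivAt_id x).const_mul c
        have h3 := h1.sub h2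
        rw [sub_self] at h3
        exact h3
      rw [fderivWithin_of_isOpen Metric.isOpen_ball hx, hdz.hasFDerivAt.fderiv]
      ext
      simp
    filter_upwards [Metric.ball_mem_nhds w₀ hr] with x hx
    exact (convex_ball w₀ r).is_const_of_fderivWithin_eq_zero hdiff hfd hx
      (Metric.mem_ball_self hr)
  have hEq : EqOn ψ (fun _ => ψ w₀) V :=
    hψA.eqOn_of_preconnected_of_eventuallyEq (fun z _ => analyticAt_const) hVpre hw₀ hψloc
  set d : ℂ := ψ w₀ with hddef
  have hlin : ∀ z ∈ V, g z = c * z + d := by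
    intro z hz
    have := hEq hz
    simp only [hψdef] at this
    linear_combination this
  -- d = 0
  have hd0 : d = 0 := by
    obtain ⟨z₁, hz₁⟩ : V.Nonempty := ⟨w₀, hw₀⟩
    obtain ⟨t₁, ht₁⟩ := my_exists_notMem
      ((hVcount.union (htrans z₁)) : (Vᶜ ∪ (fun u : ℂ => u + z₁) ⁻¹' Vᶜ).Countable)
    simp only [Set.mem_union, Set.mem_preimage, Set.mem_compl_iff, not_or, not_not] at ht₁
    obtain ⟨ht₁V, ht₁z⟩ := ht₁
    have h1 : g (t₁ + z₁) = g t₁ + g z₁ := hadd z₁ hz₁ t₁ ht₁V ht₁z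
    rw [hlin _ ht₁z, hlin _ ht₁V, hlin _ hz₁] at h1
    linear_combination -h1
  -- c ≠ 0
  have hc0 : c ≠ 0 := by
    intro h
    have h1 : g w₀ = 0 := by rw [hlin w₀ hw₀, h, hd0]; ring
    exact (inv_ne_zero hw₀.2) h1
  refine ⟨c⁻¹, inv_ne_zero hc0, ?_⟩
  -- f = c⁻¹ / z on V
  have hfV : ∀ z ∈ V, f z = c⁻¹ / z := by
    intro z hz
    have h1 : g z = c * z := by rw [hlin z hz, hd0]; ring
    have hz0 : z ≠ 0 := by
      intro h
      have h3 : g z = 0 := by rw [h1, h, mul_zero]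
      exact (inv_ne_zero hz.2) h3
    have h2 : f z = (g z)⁻¹ := by
      rw [hgdef]; simp [inv_inv]
    rw [h2, h1, mul_inv, div_eq_mul_inv]
  -- conclude at every nonzero analytic point by continuity
  intro z hz0 hzA
  have hev : ∀ᶠ w in 𝓝[≠] z, f w = c⁻¹ / w := by
    filter_upwards [hVmem z] with w hwV
    exact hfV w hwV
  have h1 : Tendsto f (𝓝[≠] z) (𝓝 (f z)) :=
    hzA.continuousAt.continuousWithinAt.tendsto
  have h2 : Tendsto (fun w : ℂ => c⁻¹ / w) (𝓝[≠] z) (𝓝 (c⁻¹ / z)) :=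
    ((continuousAt_const.div continuousAt_id hz0)).continuousWithinAt.tendsto
  have hev' : (fun w : ℂ => c⁻¹ / w) =ᶠ[𝓝[≠] z] f := hev.mono fun w hw => hw.symm
  have h3 : Tendsto f (𝓝[≠] z) (𝓝 (c⁻¹ / z)) := h2.congr' hev' 
  exact tendsto_nhds_unique h1 h3
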